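/- Let T be a positive-rate stochastic transition matrix on E_κ satisfying the condition T(a,b,c) = T(0,0,0)·T(a,b,0)·T(a,0,c)·T(0,b,c)/(T(a,0,0)·T(0,b,0)·T(0,0,c)), let η be a strictly positive probability vector, and define D^η, U^η as D^η_{a,c} = (∑_ℓ (η_ℓ/T(a,ℓ,0))·T(a,ℓ,c)) / (∑_{b'} η_{b'}/T(a,b',0)), U^η_{c,b} = ((η_b/T(0,b,0))·T(0,b,c)) / (∑_{b'} (η_{b'}/T(0,b',0))·T(0,b',c)). Then (D^η U^η)_{a,b} = (1/∑_d (η_d/T(a,d,0))) · η_b/T(a,b,0) for all a,b. -/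

import Mathlib

theorem stmt_6 (κ : ℕ) (T : Fin (κ+1) → Fin (κ+1) → Fin (κ+1) → ℝ)
    (hpos : ∀ a b c, 0 < T a b c)
    (hstoch : ∀ a b, ∑ c, T a b c = 1)
    (hcond : ∀ a b c, T a b c =
      T 0 0 0 * T a b 0 * T a 0 c * T 0 b c / (T a 0 0 * T 0 b 0 * T 0 0 c))
    (η : Fin (κ+1) → ℝ) (hη : ∀ a, 0 < η a) (hη1 : ∑ a, η a = 1)
    (D U : Matrix (Fin (κ+1)) (Fin (κ+1)) ℝ)
    (hD : ∀ a c, D a c = (∑ ℓ, (η ℓ / T a ℓ 0) * T a ℓ c) / (∑ b', η b' / T a b' 0))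
    (hU : ∀ c b, U c b = ((η b / T 0 b 0) * T 0 b c) / (∑ b', (η b' / T 0 b' 0) * T 0 b' c)) :
    ∀ a b, (D * U) a b = (1 / ∑ d, η d / T a d 0) * (η b / T a b 0) := by
  intro a b
  have hTne : ∀ a b c, T a b c ≠ 0 := fun a b c => (hpos a b c).ne'
  have hSpos : (0:ℝ) < ∑ d, η d / T a d 0 :=
    Finset.sum_pos (fun d _ => div_pos (hη d) (hpos a d 0)) Finset.univ_nonempty
  have hVpos : ∀ c, (0:ℝ) < ∑ b', (η b' / T 0 b' 0) * T 0 b' c :=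
    fun c => Finset.sum_pos
      (fun b' _ => mul_pos (div_pos (hη b') (hpos 0 b' 0)) (hpos 0 b' c))
      Finset.univ_nonempty
  have hSne := hSpos.ne'
  rw [Matrix.mul_apply]
  have key : ∀ c, D a c * U c b
      = (1 / ∑ d, η d / T a d 0) * (η b / T a b 0) * T a b c := by
    intro c
    have hVne := (hVpos c).ne'
    have hDsum : (∑ ℓ, (η ℓ / T a ℓ 0) * T a ℓ c)
        = (T 0 0 0 * T a 0 c / (T a 0 0 * T 0 0 c))
          * ∑ b', (η b' / T 0 b' 0) * T 0 b' c := by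
      rw [Finset.mul_sum]
      refine Finset.sum_congr rfl (fun ℓ _ => ?_)
      rw [hcond a ℓ c]
      field_simp [hTne]
    rw [hD, hU, hDsum, hcond a b c]
    set V := ∑ b', (η b' / T 0 b' 0) * T 0 b' c with hV
    set S := ∑ d, η d / T a d 0 with hS
    field_simp [hTne]
  rw [Finset.sum_congr rfl (fun c _ => key c), ← Finset.mul_sum, hstoch a b, mul_one]
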